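/- For every positive integer k and every integer d ≥ 2, there exists a finite training family Z_train of labeled points in ℝ^d × {1,-1}, a test set Z_test, and a target sample z_target ∈ Z_train, such that for every parameter vector θ ∈ ℝ^d the empirical-loss Hessian H_θ is invertible and the number of training samples z in Z_train with I_θ(z, Z_test) > I_θ(z_target, Z_test) is at least k; i.e., no logistic-regression model places z_target in the top-k influence rankings. Concretely, one may take Z_test = {(e_1,1)} and Z_train consisting of (e_i, y_i) for i = 2,…,d with arbitrary labels y_i ∈ {1,-1}, the point (e_1,1) (the target), and k duplicated copies of (-e_1,1). -/

import Mathlib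

open Matrix
noncomputable section

/-- The sigmoid function `σ(t) = 1/(1+exp(-t))`. -/
def sigmoid (t : ℝ) : ℝ := 1 / (1 + Real.exp (-t))

/-- A labeled sample `(x, y)` with `x ∈ ℝ^d` and label `y ∈ ℝ` (intended `y ∈ {1,-1}`). -/
abbrev Sample (d : ℕ) := (Fin d → ℝ) × ℝ

/-- Gradient in `θ` of the logistic loss `L((x,y),θ) = log(1+exp(-y⟨x,θ⟩))`,
namely `-y·σ(-y⟨x,θ⟩)·x`. -/
def lossGrad {d : ℕ} (z : Sample d) (θ : Fin d → ℝ) : Fin d → ℝ :=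
  (-z.2 * sigmoid (-(z.2 * (z.1 ⬝ᵥ θ)))) • z.1

/-- Empirical-loss Hessian `H_θ = (1/n)·Σ_i σ(⟨x_i,θ⟩)σ(-⟨x_i,θ⟩)·x_i x_iᵀ`. -/
def hess {d n : ℕ} (Ztrain : Fin n → Sample d) (θ : Fin d → ℝ) : Matrix (Fin d) (Fin d) ℝ :=
  (n : ℝ)⁻¹ • ∑ i, (sigmoid ((Ztrain i).1 ⬝ᵥ θ) * sigmoid (-((Ztrain i).1 ⬝ᵥ θ))) •
    vecMulVec (Ztrain i).1 (Ztrain i).1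

/-- Influence of a training sample `z` on a test set `Ztest`:
`I_θ(z, Ztest) = Σ_j -g_{ztest_j}(θ)ᵀ H_θ⁻¹ g_z(θ)`. -/
def influence {d n m : ℕ} (Ztrain : Fin n → Sample d) (θ : Fin d → ℝ)
    (z : Sample d) (Ztest : Fin m → Sample d) : ℝ :=
  ∑ j, -(lossGrad (Ztest j) θ ⬝ᵥ ((hess Ztrain θ)⁻¹ *ᵥ lossGrad z θ))

lemma sigmoid_pos (t : ℝ) : 0 < sigmoid t := by
  have : 0 < 1 + Real.exp (-t) := by positivity
  exact div_pos one_pos this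

/-- For every positive integer k and every d ≥ 2 there exist a training family,
a test set, and a target index such that for every θ the empirical-loss Hessian is invertible
and at least k training samples have strictly larger influence than the target, i.e. no
logistic-regression model places the target in the top-k influence rankings. -/
theorem influence_impossibility_topk (k : ℕ) (hk : 0 < k) (d : ℕ) (hd : 2 ≤ d) :
    ∃ (n m : ℕ) (Ztrain : Fin n → Sample d) (Ztest : Fin m → Sample d) (i₀ : Fin n),
      (∀ i, (Ztrain i).2 = 1 ∨ (Ztrain i).2 = -1) ∧
      (∀ j, (Ztest j).2 = 1 ∨ (Ztest j).2 = -1) ∧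
      ∀ θ : Fin d → ℝ,
        IsUnit (hess Ztrain θ) ∧
        k ≤ (Finset.univ.filter (fun i : Fin n =>
          influence Ztrain θ (Ztrain i₀) Ztest < influence Ztrain θ (Ztrain i) Ztest)).card := by
  have hd0 : 0 < d := by omega
  set z0 : Fin d := ⟨0, hd0⟩ with hz0
  set s : Fin d → ℝ := Pi.single z0 1 with hs
  set Xtr : Fin (d + k) → Sample d :=
    fun i => if h : (i : ℕ) < d then (Pi.single (⟨(i : ℕ), h⟩ : Fin d) (1 : ℝ), 1) else (-s, 1)
    with hXtr
  have hi0 : (0 : ℕ) < d + k := by omega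
  refine ⟨d + k, 1, Xtr, fun _ => (s, 1), ⟨0, hi0⟩, ?_, ?_, ?_⟩
  · intro i; left; simp only [hXtr]; split <;> rfl
  · intro j; left; rfl
  intro θ
  set c : Fin (d + k) → ℝ :=
    fun i => sigmoid ((Xtr i).1 ⬝ᵥ θ) * sigmoid (-((Xtr i).1 ⬝ᵥ θ)) with hc
  have hcpos : ∀ i, 0 < c i := fun i => mul_pos (sigmoid_pos _) (sigmoid_pos _)
  have hx : ∀ i : Fin (d + k), ∃ (j : Fin d) (ε : ℝ),
      (Xtr i).1 = ε • (Pi.single j (1 : ℝ) : Fin d → ℝ) := by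
    intro i
    by_cases h : (i : ℕ) < d
    · exact ⟨⟨i, h⟩, 1, by simp [hXtr, dif_pos h]⟩
    · exact ⟨z0, -1, by simp [hXtr, dif_neg h, hs]⟩
  set g : Fin d → ℝ := fun a => hess Xtr θ a a with hg
  have hentry : ∀ a b : Fin d,
      hess Xtr θ a b = ((d + k : ℕ) : ℝ)⁻¹ * ∑ i, c i * ((Xtr i).1 a * (Xtr i).1 b) := by
    intro a b
    simp [hess, Matrix.smul_apply, Matrix.sum_apply, vecMulVec_apply, smul_eq_mul, hc]
  have hdiag : hess Xtr θ = Matrix.diagonal g := by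
    ext a b
    by_cases hab : a = b
    · subst hab; simp [Matrix.diagonal_apply_eq, hg]
    · rw [Matrix.diagonal_apply_ne _ hab, hentry]
      have hzero : ∀ i : Fin (d + k), c i * ((Xtr i).1 a * (Xtr i).1 b) = 0 := by
        intro i
        obtain ⟨j, ε, hxe⟩ := hx i
        rcases eq_or_ne a j with rfl | ha
        · have hb : b ≠ a := Ne.symm hab
          simp [hxe, Pi.single_eq_of_ne hb]
        · simp [hxe, Pi.single_eq_of_ne ha]
      rw [Finset.sum_congr rfl (fun i _ => hzero i), Finset.sum_const_zero, mul_zero]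
  have hgpos : ∀ a, 0 < g a := by
    intro a
    have ha : (a : ℕ) < d + k := lt_of_lt_of_le a.isLt (by omega)
    have h1 : (Xtr (⟨a, ha⟩ : Fin (d + k))).1 a = 1 := by
      simp [hXtr, a.isLt]
    show (0:ℝ) < hess Xtr θ a a
    rw [hentry]
    apply mul_pos (inv_pos.mpr (by positivity))
    apply Finset.sum_pos'
    · intro i _
      exact mul_nonneg (hcpos i).le (mul_self_nonneg _)
    · refine ⟨⟨a, ha⟩, Finset.mem_univ _, ?_⟩
      rw [h1]
      simpa using hcpos ⟨a, ha⟩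
  have hunit : IsUnit (hess Xtr θ) := by
    rw [hdiag, Matrix.isUnit_iff_isUnit_det, Matrix.det_diagonal]
    exact isUnit_iff_ne_zero.mpr (ne_of_gt (Finset.prod_pos fun a _ => hgpos a))
  have hinv : (hess Xtr θ)⁻¹ = Matrix.diagonal (fun a => (g a)⁻¹) := by
    rw [hdiag]
    apply Matrix.inv_eq_right_inv
    rw [Matrix.diagonal_mul_diagonal,
      show (fun i => g i * (g i)⁻¹) = (1 : Fin d → ℝ) from
        funext fun a => mul_inv_cancel₀ (hgpos a).ne']
    exact Matrix.diagonal_one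
  have hgt : lossGrad (s, 1) θ = (-(sigmoid (-(θ z0)))) • s := by
    simp [lossGrad, hs, single_dotProduct]
  have hinf : ∀ z : Sample d,
      influence Xtr θ z (fun _ : Fin 1 => (s, 1)) =
        sigmoid (-(θ z0)) * ((g z0)⁻¹ * lossGrad z θ z0) := by
    intro z
    simp only [influence, Fin.sum_univ_one]
    rw [hgt, hinv, smul_dotProduct]
    rw [hs, single_dotProduct, Matrix.mulVec_diagonal]
    simp only [smul_eq_mul]
    ring
  have hXt0 : Xtr ⟨0, hi0⟩ = (s, 1) := by
    simp only [hXtr]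
    rw [dif_pos (show ((⟨0, hi0⟩ : Fin (d + k)) : ℕ) < d from hd0)]
  have htarget : influence Xtr θ (Xtr ⟨0, hi0⟩) (fun _ : Fin 1 => (s, 1)) < 0 := by
    rw [hXt0, hinf]
    have hgz : lossGrad (s, 1) θ z0 = -(sigmoid (-(θ z0))) := by
      rw [hgt]; simp [hs]
    rw [hgz]
    have hpos : 0 < sigmoid (-(θ z0)) * sigmoid (-(θ z0)) * (g z0)⁻¹ :=
      mul_pos (mul_pos (sigmoid_pos _) (sigmoid_pos _)) (inv_pos.mpr (hgpos z0))
    nlinarith [hpos]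
  have hcopy : ∀ i : Fin (d + k), ¬ ((i : ℕ) < d) →
      0 < influence Xtr θ (Xtr i) (fun _ : Fin 1 => (s, 1)) := by
    intro i hi
    have hXi : Xtr i = (-s, 1) := by
      simp only [hXtr]; rw [dif_neg hi]
    rw [hXi, hinf]
    have hgz : lossGrad (-s, 1) θ z0 = sigmoid (θ z0) := by
      simp [lossGrad, hs, neg_dotProduct, single_dotProduct]
    rw [hgz]
    exact mul_pos (sigmoid_pos _) (mul_pos (inv_pos.mpr (hgpos z0)) (sigmoid_pos _))
  refine ⟨hunit, ?_⟩
  calc k = (Finset.univ : Finset (Fin k)).card := (Finset.card_fin k).symm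
    _ ≤ _ := by
        apply Finset.card_le_card_of_injOn (fun j : Fin k => (⟨d + j, by omega⟩ : Fin (d + k)))
        · intro j _
          rw [Finset.mem_coe, Finset.mem_filter]
          refine ⟨Finset.mem_univ _, ?_⟩
          exact lt_trans htarget (hcopy _ (by simp))
        · intro a _ b _ h
          have h' : d + (a : ℕ) = d + (b : ℕ) := by
            simpa using congrArg Fin.val h
          exact Fin.ext (by omega)
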